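/- Let f ∈ ℤ[X] with 0 < |f(a)| < |f(b)| for integers a, b, let M be the maximum of the absolute values of the complex roots of f, let k ≥ 1 and let q_k be defined via admissible divisors. If |b| > q_k·|a| + (1 + q_k)·M, then f is a product of at most k irreducible factors over ℚ. -/

import Mathlib

open Polynomial Real

noncomputable section

/-- `d` is an admissible divisor of `f(a)`. -/
def AdmDiv (f : Polynomial ℤ) (a d : ℤ) : Prop :=
  d ∣ f.eval a ∧
    Int.gcd d (f.eval a / d) ∣ Int.gcd (f.eval a) (f.derivative.eval a)

/-- `d` is a unitary divisor of `N`. -/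
def UnitDiv (N d : ℤ) : Prop := d ∣ N ∧ Int.gcd d (N / d) = 1

/-- `f` is a product of at most `k` nonconstant irreducible factors over `ℚ`
(counting multiplicities): it cannot be written as a product of `k + 1`
nonconstant polynomials over `ℚ`. -/
def FactorsAtMost (f : Polynomial ℤ) (k : ℕ) : Prop :=
  ∀ g : Fin (k + 1) → Polynomial ℚ, (∀ i, 0 < (g i).natDegree) →
    f.map (Int.castRingHom ℚ) ≠ ∏ i, g i

/-- `q` is the quantity `q_k` of the paper: the greatest ratio `d₂/d₁` of
admissible divisors of `f(b)` and `f(a)` not exceeding `(|f(b)|/|f(a)|)^(1/(k+1))`. -/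
def IsQk (f : Polynomial ℤ) (a b : ℤ) (k : ℕ) (q : ℝ) : Prop :=
  IsGreatest {x : ℝ | ∃ d₁ d₂ : ℤ, AdmDiv f a d₁ ∧ AdmDiv f b d₂ ∧
    x = (d₂ : ℝ) / (d₁ : ℝ) ∧
    x ≤ (|((f.eval b : ℤ) : ℝ)| / |((f.eval a : ℤ) : ℝ)|) ^ ((k + 1 : ℝ))⁻¹} q

/-- `q` is the quantity `q^u_k` of the paper, defined via unitary divisors. -/
def IsQuk (f : Polynomial ℤ) (a b : ℤ) (k : ℕ) (q : ℝ) : Prop :=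
  IsGreatest {x : ℝ | ∃ d₁ d₂ : ℤ, UnitDiv (f.eval a) d₁ ∧ UnitDiv (f.eval b) d₂ ∧
    x = (d₂ : ℝ) / (d₁ : ℝ) ∧
    x ≤ (|((f.eval b : ℤ) : ℝ)| / |((f.eval a : ℤ) : ℝ)|) ^ ((k + 1 : ℝ))⁻¹} q


lemma primPart_map (Z : Polynomial ℤ) (hZ : Z ≠ 0) (b : ℚ) (hb : b ≠ 0) (p : Polynomial ℚ)
    (h : Z.map (Int.castRingHom ℚ) = C b * p) :
    Z.primPart.map (Int.castRingHom ℚ) = C (((Z.content : ℤ) : ℚ)⁻¹ * b) * p := by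
  have hc : ((Z.content : ℤ) : ℚ) ≠ 0 := by
    simp [Polynomial.content_eq_zero_iff, hZ]
  have h2 : C ((Z.content : ℤ) : ℚ) * Z.primPart.map (Int.castRingHom ℚ) = C b * p := by
    rw [← h]
    conv_rhs => rw [Z.eq_C_content_mul_primPart]
    simp [Polynomial.map_mul]
  apply mul_left_cancel₀ (a := C ((Z.content : ℤ) : ℚ)) (by simpa using hc)
  rw [h2, ← mul_assoc, ← C_mul,
    show ((Z.content : ℤ) : ℚ) * (((Z.content : ℤ) : ℚ)⁻¹ * b) = b by field_simp]

lemma lift_two (f : Polynomial ℤ) (hf : f ≠ 0) (g h : Polynomial ℚ)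
    (heq : f.map (Int.castRingHom ℚ) = g * h) :
    ∃ (G H : Polynomial ℤ) (c : ℚ), c ≠ 0 ∧ f = G * H ∧
      G.natDegree = g.natDegree ∧ H.map (Int.castRingHom ℚ) = C c * h := by
  have hinj : Function.Injective (Int.castRingHom ℚ) := Int.cast_injective
  have halg : algebraMap ℤ ℚ = Int.castRingHom ℚ := by ext n; simp
  have hmapf : f.map (Int.castRingHom ℚ) ≠ 0 := by
    simpa [Polynomial.map_ne_zero_iff hinj] using hf
  have hg0 : g ≠ 0 := fun hg => hmapf (by simp [heq, hg])
  have hh0 : h ≠ 0 := fun hh => hmapf (by simp [heq, hh])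
  -- integer normalizations
  obtain ⟨bg, hbg⟩ := IsLocalization.integerNormalization_map_to_map (nonZeroDivisors ℤ) g
  obtain ⟨bh, hbh⟩ := IsLocalization.integerNormalization_map_to_map (nonZeroDivisors ℤ) h
  set Zg := IsLocalization.integerNormalization (nonZeroDivisors ℤ) g with hZg
  set Zh := IsLocalization.integerNormalization (nonZeroDivisors ℤ) h with hZh
  have hbg0 : ((bg : ℤ) : ℚ) ≠ 0 := by
    exact_mod_cast Int.cast_ne_zero.mpr (nonZeroDivisors.coe_ne_zero bg)
  have hbh0 : ((bh : ℤ) : ℚ) ≠ 0 := by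
    exact_mod_cast Int.cast_ne_zero.mpr (nonZeroDivisors.coe_ne_zero bh)
  have hZgmap : Zg.map (Int.castRingHom ℚ) = C ((bg : ℤ) : ℚ) * g := by
    rw [← halg, hbg, Algebra.smul_def]
    congr 1
  have hZhmap : Zh.map (Int.castRingHom ℚ) = C ((bh : ℤ) : ℚ) * h := by
    rw [← halg, hbh, Algebra.smul_def]
    congr 1
  set Pg := Zg.primPart with hPg
  set Ph := Zh.primPart with hPh
  have hZg0 : Zg ≠ 0 := by
    intro h0
    rw [h0] at hZgmap; simp at hZgmap
    exact hg0 (by tauto)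
  have hZh0 : Zh ≠ 0 := by
    intro h0
    rw [h0] at hZhmap; simp at hZhmap
    exact hh0 (by tauto)
  have hcg0 : ((Zg.content : ℤ) : ℚ) ≠ 0 := by
    simp [Polynomial.content_eq_zero_iff, hZg0]
  have hch0 : ((Zh.content : ℤ) : ℚ) ≠ 0 := by
    simp [Polynomial.content_eq_zero_iff, hZh0]
  -- map of primParts
  have hPgmap := primPart_map Zg hZg0 _ hbg0 g hZgmap
  have hPhmap := primPart_map Zh hZh0 _ hbh0 h hZhmap
  set cg : ℚ := ((Zg.content : ℤ) : ℚ)⁻¹ * ((bg : ℤ) : ℚ) with hcgdef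
  set ch : ℚ := ((Zh.content : ℤ) : ℚ)⁻¹ * ((bh : ℤ) : ℚ) with hchdef
  have hcgne : cg ≠ 0 := mul_ne_zero (inv_ne_zero hcg0) hbg0
  have hchne : ch ≠ 0 := mul_ne_zero (inv_ne_zero hch0) hbh0
  -- Pg * Ph is primitive
  have hprim : (Pg * Ph).IsPrimitive :=
    (Polynomial.isPrimitive_primPart Zg).mul (Polynomial.isPrimitive_primPart Zh)
  have hfc0 : ((f.content : ℤ) : ℚ) ≠ 0 := by
    simp [Polynomial.content_eq_zero_iff, hf]
  -- the maps of f.primPart and Pg * Ph agree up to a nonzero rational constant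
  have hmapeq : (Pg * Ph).map (Int.castRingHom ℚ)
      = C (cg * ch * ((f.content : ℤ) : ℚ)) * f.primPart.map (Int.castRingHom ℚ) := by
    rw [Polynomial.map_mul, hPgmap, hPhmap]
    have : C ((f.content : ℤ) : ℚ) * f.primPart.map (Int.castRingHom ℚ)
        = g * h := by
      rw [← heq]
      conv_rhs => rw [f.eq_C_content_mul_primPart]
      simp [Polynomial.map_mul]
    calc C cg * g * (C ch * h) = C cg * C ch * (g * h) := by ring
    _ = C cg * C ch * (C ((f.content : ℤ) : ℚ) * f.primPart.map (Int.castRingHom ℚ)) := by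
        rw [this]
    _ = _ := by simp only [C_mul]; ring
  have hcc : cg * ch * ((f.content : ℤ) : ℚ) ≠ 0 :=
    mul_ne_zero (mul_ne_zero hcgne hchne) hfc0
  -- mutual divisibility over ℚ, hence associated over ℤ
  have hd1 : f.primPart ∣ Pg * Ph := by
    apply (Polynomial.isPrimitive_primPart f).dvd_of_fraction_map_dvd_fraction_map
      (K := ℚ)
    rw [halg, hmapeq]
    exact dvd_mul_left _ _
  have hd2 : Pg * Ph ∣ f.primPart := by
    apply hprim.dvd_of_fraction_map_dvd_fraction_map (K := ℚ)
    rw [halg, hmapeq]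
    refine ⟨C (cg * ch * ((f.content : ℤ) : ℚ))⁻¹, ?_⟩
    rw [mul_comm, ← mul_assoc, ← C_mul, inv_mul_cancel₀ hcc]
    simp
  obtain ⟨u, hu⟩ := (associated_of_dvd_dvd hd2 hd1)
  obtain ⟨r, hr, hru⟩ := Polynomial.isUnit_iff.mp u.isUnit
  have hfeq : f = (C (f.content * r) * Pg) * Ph := by
    conv_lhs => rw [f.eq_C_content_mul_primPart, ← hu, ← hru]
    rw [C_mul]
    ring
  refine ⟨C (f.content * r) * Pg, Ph, ch, hchne, hfeq, ?_, hPhmap⟩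
  -- degree computation
  have hr0 : f.content * r ≠ 0 := by
    intro h0
    rcases mul_eq_zero.mp h0 with h0 | h0
    · exact hfc0 (by exact_mod_cast congrArg (Int.cast : ℤ → ℚ) h0)
    · exact hr.ne_zero h0
  rw [Polynomial.natDegree_C_mul hr0]
  have : (Pg.map (Int.castRingHom ℚ)).natDegree = (C cg * g).natDegree := by rw [hPgmap]
  rw [Polynomial.natDegree_map_eq_of_injective hinj] at this
  rw [this, Polynomial.natDegree_C_mul hcgne]

lemma lift_many : ∀ (n : ℕ) (f : Polynomial ℤ), f ≠ 0 → ∀ (g : Fin n → Polynomial ℚ) (c : ℚ), c ≠ 0 →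
    f.map (Int.castRingHom ℚ) = C c * ∏ i, g i →
    ∃ (G : Fin n → Polynomial ℤ) (d : ℤ), f = C d * ∏ i, G i ∧
      ∀ i, (G i).natDegree = (g i).natDegree := by
  intro n
  induction n with
  | zero =>
    intro f hf g c hc heq
    refine ⟨fun i => i.elim0, f.coeff 0, ?_, fun i => i.elim0⟩
    have hinj : Function.Injective ⇑(Int.castRingHom ℚ) := Int.cast_injective
    have hdeg : f.natDegree = 0 := by
      have := Polynomial.natDegree_map_eq_of_injective hinj f
      rw [heq] at this
      simpa using this.symm
    simpa using (Polynomial.eq_C_of_natDegree_eq_zero hdeg)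
  | succ n ih =>
    intro f hf g c hc heq
    have heq2 : f.map (Int.castRingHom ℚ) = (C c * g 0) * ∏ i : Fin n, g i.succ := by
      rw [heq, Fin.prod_univ_succ]; ring
    obtain ⟨G0, H, c', hc', hfeq, hdeg0, hH⟩ := lift_two f hf _ _ heq2
    have hH0 : H ≠ 0 := fun h0 => hf (by simp [hfeq, h0])
    obtain ⟨G', d, hHeq, hdeg'⟩ := ih H hH0 (fun i => g i.succ) c' hc' hH
    refine ⟨Fin.cons G0 G', d, ?_, ?_⟩
    · rw [Fin.prod_univ_succ]
      simp only [Fin.cons_zero, Fin.cons_succ]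
      rw [hfeq, hHeq]; ring
    · intro i
      refine Fin.cases ?_ ?_ i
      · simpa [Polynomial.natDegree_C_mul hc] using hdeg0
      · intro j; simpa using hdeg' j

lemma lift_final (f : Polynomial ℤ) (hf : f ≠ 0) (n : ℕ) (g : Fin (n + 1) → Polynomial ℚ)
    (heq : f.map (Int.castRingHom ℚ) = ∏ i, g i) :
    ∃ G : Fin (n + 1) → Polynomial ℤ, f = ∏ i, G i ∧
      ∀ i, (G i).natDegree = (g i).natDegree := by
  obtain ⟨G, d, hfeq, hdeg⟩ := lift_many (n + 1) f hf g 1 one_ne_zero (by simpa using heq)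
  have hd : d ≠ 0 := by
    intro h0
    exact hf (by simp [hfeq, h0])
  refine ⟨Function.update G 0 (C d * G 0), ?_, ?_⟩
  · rw [Finset.prod_update_of_mem (Finset.mem_univ 0), hfeq,
      ← Finset.mul_prod_erase Finset.univ G (Finset.mem_univ 0),
      show (Finset.univ \ {0} : Finset (Fin (n+1))) = Finset.univ.erase 0 by
        simp [Finset.sdiff_singleton_eq_erase]]
    ring
  · intro i
    rcases eq_or_ne i 0 with rfl | hi
    · rw [Function.update_self, Polynomial.natDegree_C_mul hd, hdeg 0]
    · simp [Function.update_of_ne hi, hdeg i]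

lemma prod_lower (z : ℂ) (c : ℝ) (hc : 0 ≤ c) (s : Multiset ℂ)
    (hbound : ∀ θ ∈ s, c ≤ ‖z - θ‖) :
    c ^ Multiset.card s ≤ (s.map (fun θ => ‖z - θ‖)).prod := by
  induction s using Multiset.induction_on with
  | empty => simp
  | cons θ t ih =>
    have h1 : c ≤ ‖z - θ‖ := hbound θ (Multiset.mem_cons_self θ t)
    have h2 := ih (fun x hx => hbound x (Multiset.mem_cons_of_mem hx))
    simp only [Multiset.map_cons, Multiset.prod_cons, Multiset.card_cons, pow_succ]
    calc c ^ Multiset.card t * c ≤ (t.map (fun θ => ‖z - θ‖)).prod * ‖z - θ‖ := by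
          apply mul_le_mul h2 h1 hc
          exact Multiset.prod_nonneg (by
            intro x hx
            obtain ⟨y, _, rfl⟩ := Multiset.mem_map.mp hx
            exact norm_nonneg _)
      _ = _ := mul_comm _ _

lemma prod_upper (z : ℂ) (c : ℝ) (s : Multiset ℂ)
    (hbound : ∀ θ ∈ s, ‖z - θ‖ ≤ c) :
    (s.map (fun θ => ‖z - θ‖)).prod ≤ c ^ Multiset.card s := by
  induction s using Multiset.induction_on with
  | empty => simp
  | cons θ t ih =>
    have h1 : ‖z - θ‖ ≤ c := hbound θ (Multiset.mem_cons_self θ t)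
    have h2 := ih (fun x hx => hbound x (Multiset.mem_cons_of_mem hx))
    have hprodnn : 0 ≤ (t.map (fun θ => ‖z - θ‖)).prod :=
      Multiset.prod_nonneg (by
        intro x hx
        obtain ⟨y, _, rfl⟩ := Multiset.mem_map.mp hx
        exact norm_nonneg _)
    simp only [Multiset.map_cons, Multiset.prod_cons, Multiset.card_cons, pow_succ]
    calc ‖z - θ‖ * (t.map (fun θ => ‖z - θ‖)).prod
        ≤ c * c ^ Multiset.card t :=
          mul_le_mul h1 h2 hprodnn ((norm_nonneg _).trans h1)
      _ = _ := mul_comm _ _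

lemma root_bound (G : Polynomial ℤ) (hdeg : 0 < G.natDegree) (M : ℝ)
    (hM : ∀ θ : ℂ, Polynomial.aeval θ G = 0 → ‖θ‖ ≤ M)
    (q : ℝ) (hq1 : 1 ≤ q) (a b : ℤ)
    (hb : (|b| : ℝ) > q * (|a| : ℝ) + (1 + q) * M) :
    q * |((G.eval a : ℤ) : ℝ)| < |((G.eval b : ℤ) : ℝ)| := by
  have hG0 : G ≠ 0 := fun h => by simp [h] at hdeg
  have halg : algebraMap ℤ ℂ = Int.castRingHom ℂ := by ext n; simp
  have hinj : Function.Injective ⇑(Int.castRingHom ℂ) := Int.cast_injective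
  set P := G.map (Int.castRingHom ℂ) with hPdef
  have hP0 : P ≠ 0 := by
    rw [hPdef, Polynomial.map_ne_zero_iff hinj]; exact hG0
  have hPdeg : P.natDegree = G.natDegree := Polynomial.natDegree_map_eq_of_injective hinj G
  have haev : ∀ θ : ℂ, P.eval θ = Polynomial.aeval θ G := by
    intro θ
    rw [hPdef, Polynomial.eval_map, Polynomial.aeval_def, halg]
  have hroot : ∀ θ ∈ P.roots, ‖θ‖ ≤ M := by
    intro θ hθ
    apply hM
    rw [← haev]
    exact Polynomial.isRoot_of_mem_roots hθ
  have hM0 : 0 ≤ M := by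
    obtain ⟨θ0, hθ0⟩ := IsAlgClosed.exists_root P (by
      intro h0
      rw [Polynomial.degree_eq_natDegree hP0] at h0
      simp [hPdeg] at h0
      omega)
    have : ‖θ0‖ ≤ M := by
      apply hM; rw [← haev]; exact hθ0
    exact (norm_nonneg _).trans this
  have hcard : P.roots.card = P.natDegree :=
    Polynomial.splits_iff_card_roots.mp (IsAlgClosed.splits P)
  have hfact := Polynomial.C_leadingCoeff_mul_prod_multiset_X_sub_C hcard
  have heval : ∀ z : ℂ, P.eval z = P.leadingCoeff * (P.roots.map (fun θ => z - θ)).prod := by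
    intro z
    conv_lhs => rw [← hfact]
    rw [Polynomial.eval_mul, Polynomial.eval_C, Polynomial.eval_multiset_prod, Multiset.map_map]
    simp [Function.comp]
  have habs : ∀ z : ℂ, ‖P.eval z‖
      = ‖P.leadingCoeff‖ * (P.roots.map (fun θ => ‖z - θ‖)).prod := by
    intro z
    rw [heval z, norm_mul]; congr 1
    exact (map_multiset_prod (normHom : ℂ →*₀ ℝ) _).trans (by rw [Multiset.map_map]; rfl)
  have hlc : 0 < ‖P.leadingCoeff‖ := by
    simp [Polynomial.leadingCoeff_ne_zero, hP0, norm_pos_iff]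
  -- numeric facts
  have hqa : 0 ≤ q * ((|a| : ℝ) + M) := by positivity
  have hkey : q * ((|a| : ℝ) + M) < (|b| : ℝ) - M := by nlinarith
  have hbM : (0:ℝ) ≤ (|b| : ℝ) - M := le_trans hqa hkey.le
  -- bounds on roots products
  have hlow : ((|b| : ℝ) - M) ^ Multiset.card P.roots
      ≤ (P.roots.map (fun θ => ‖((b : ℤ) : ℂ) - θ‖)).prod := by
    apply prod_lower _ _ hbM
    intro θ hθ
    have h1 : ‖(b : ℂ)‖ - ‖θ‖ ≤ ‖((b : ℤ) : ℂ) - θ‖ :=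
      norm_sub_norm_le _ _
    have h2 : ‖(b : ℂ)‖ = (|b| : ℝ) := Complex.norm_intCast b
    have := hroot θ hθ
    rw [h2] at h1
    linarith
  have hup : (P.roots.map (fun θ => ‖((a : ℤ) : ℂ) - θ‖)).prod
      ≤ ((|a| : ℝ) + M) ^ Multiset.card P.roots := by
    apply prod_upper
    intro θ hθ
    have h1 : ‖((a : ℤ) : ℂ) - θ‖ ≤ ‖(a : ℂ)‖ + ‖θ‖ :=
      norm_sub_le _ _
    have h2 : ‖(a : ℂ)‖ = (|a| : ℝ) := Complex.norm_intCast a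
    have := hroot θ hθ
    rw [h2] at h1
    linarith
  -- translate evals
  have hevb : |((G.eval b : ℤ) : ℝ)| = ‖P.eval ((b : ℤ) : ℂ)‖ := by
    rw [hPdef, Polynomial.eval_intCast_map]
    exact (Complex.norm_intCast _).symm
  have heva : |((G.eval a : ℤ) : ℝ)| = ‖P.eval ((a : ℤ) : ℂ)‖ := by
    rw [hPdef, Polynomial.eval_intCast_map]
    exact (Complex.norm_intCast _).symm
  set n := Multiset.card P.roots with hn
  have hn1 : 1 ≤ n := by
    omega
  set L := ‖P.leadingCoeff‖ with hL
  calc q * |((G.eval a : ℤ) : ℝ)| = q * (L * (P.roots.map (fun θ => ‖((a : ℤ) : ℂ) - θ‖)).prod) := by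
        rw [heva, habs]
    _ ≤ q * (L * ((|a| : ℝ) + M) ^ n) := by
        apply mul_le_mul_of_nonneg_left _ (by linarith)
        exact mul_le_mul_of_nonneg_left hup hlc.le
    _ ≤ q ^ n * (L * ((|a| : ℝ) + M) ^ n) := by
        apply mul_le_mul_of_nonneg_right (le_self_pow₀ hq1 (by omega)) (by positivity)
    _ = L * (q * ((|a| : ℝ) + M)) ^ n := by rw [mul_pow]; ring
    _ < L * ((|b| : ℝ) - M) ^ n := by
        apply mul_lt_mul_of_pos_left _ hlc
        exact pow_lt_pow_left₀ hkey hqa (by omega)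
    _ ≤ L * (P.roots.map (fun θ => ‖((b : ℤ) : ℂ) - θ‖)).prod :=
        mul_le_mul_of_nonneg_left hlow hlc.le
    _ = |((G.eval b : ℤ) : ℝ)| := by rw [hevb, habs]

lemma gcd_natAbs_div (d fa : ℤ) :
    Int.gcd ((d.natAbs : ℤ)) (fa / (d.natAbs : ℤ)) = Int.gcd d (fa / d) := by
  rcases Int.natAbs_eq d with h | h
  · rw [← h]
  · rw [show ((d.natAbs : ℤ)) = -d by omega, Int.ediv_neg]
    simp [Int.gcd, Int.natAbs_neg]

lemma adm_one (f : Polynomial ℤ) (t : ℤ) : AdmDiv f t 1 :=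
  ⟨one_dvd _, by simp [Int.gcd]⟩

lemma adm_of_factor (f : Polynomial ℤ) (t : ℤ) (G H : Polynomial ℤ) (hf : f = G * H)
    (ht : f.eval t ≠ 0) : AdmDiv f t (((G.eval t).natAbs : ℤ)) := by
  set d := G.eval t with hd
  set e := H.eval t with he
  have hfe : f.eval t = d * e := by rw [hf, Polynomial.eval_mul]
  have hd0 : d ≠ 0 := fun h0 => ht (by rw [hfe, h0, zero_mul])
  have hdvd : d ∣ f.eval t := ⟨e, hfe⟩
  constructor
  · exact (Int.natAbs_dvd).mpr hdvd
  · rw [gcd_natAbs_div d (f.eval t)]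
    have hdiv : f.eval t / d = e := by rw [hfe]; exact Int.mul_ediv_cancel_left e hd0
    rw [hdiv, ← Int.natCast_dvd_natCast]
    apply Int.dvd_coe_gcd
    · rw [hfe]
      exact dvd_mul_of_dvd_left (Int.gcd_dvd_left _ _) e
    · rw [hf, Polynomial.derivative_mul, Polynomial.eval_add, Polynomial.eval_mul,
        Polynomial.eval_mul]
      exact dvd_add (dvd_mul_of_dvd_right (Int.gcd_dvd_right _ _) _)
        (dvd_mul_of_dvd_left (Int.gcd_dvd_left _ _) _)

theorem stmt6 (f : Polynomial ℤ) (a b : ℤ) (k : ℕ) (hk : 1 ≤ k)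
    (ha : f.eval a ≠ 0) (hab : |f.eval a| < |f.eval b|)
    (M : ℝ) (hM : ∀ θ : ℂ, aeval θ f = 0 → ‖θ‖ ≤ M)
    (q : ℝ) (hq : IsQk f a b k q)
    (hb : (|b| : ℝ) > q * (|a| : ℝ) + (1 + q) * M) :
    FactorsAtMost f k := by
  intro g hg heq
  have hf0 : f ≠ 0 := fun h0 => ha (by simp [h0])
  have hb0 : f.eval b ≠ 0 := by
    intro h0
    rw [h0] at hab
    simp only [abs_zero] at hab
    exact (abs_nonneg _).not_gt hab
  obtain ⟨G, hfeq, hdegeq⟩ := lift_final f hf0 k g heq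
  have hdegG : ∀ i, 0 < (G i).natDegree := fun i => by rw [hdegeq i]; exact hg i
  have hprodeval : ∀ t : ℤ, f.eval t = ∏ i, (G i).eval t := by
    intro t; rw [hfeq, Polynomial.eval_prod]
  have hGa : ∀ i, (G i).eval a ≠ 0 := by
    intro i h0
    exact ha (by rw [hprodeval a]; exact Finset.prod_eq_zero (Finset.mem_univ i) h0)
  have hGb : ∀ i, (G i).eval b ≠ 0 := by
    intro i h0
    exact hb0 (by rw [hprodeval b]; exact Finset.prod_eq_zero (Finset.mem_univ i) h0)
  set R : ℝ := (|((f.eval b : ℤ) : ℝ)| / |((f.eval a : ℤ) : ℝ)|) ^ ((k + 1 : ℝ))⁻¹ with hRdef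
  have hfa0 : (0:ℝ) < |((f.eval a : ℤ) : ℝ)| :=
    abs_pos.mpr (Int.cast_ne_zero.mpr ha)
  have hfb0 : (0:ℝ) < |((f.eval b : ℤ) : ℝ)| :=
    abs_pos.mpr (Int.cast_ne_zero.mpr hb0)
  have hab' : |((f.eval a : ℤ) : ℝ)| < |((f.eval b : ℤ) : ℝ)| := by
    have : ((|f.eval a| : ℤ) : ℝ) < ((|f.eval b| : ℤ) : ℝ) := by exact_mod_cast hab
    rwa [Int.cast_abs, Int.cast_abs] at this
  have hratio1 : (1:ℝ) ≤ |((f.eval b : ℤ) : ℝ)| / |((f.eval a : ℤ) : ℝ)| :=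
    (one_le_div hfa0).mpr hab'.le
  have hR1 : 1 ≤ R := Real.one_le_rpow hratio1 (by positivity)
  have hR0 : (0:ℝ) < R := zero_lt_one.trans_le hR1
  have hq1 : 1 ≤ q := hq.2 ⟨1, 1, adm_one f a, adm_one f b, by norm_num, by simpa using hR1⟩
  have hRpow : R ^ (k + 1) = |((f.eval b : ℤ) : ℝ)| / |((f.eval a : ℤ) : ℝ)| := by
    rw [hRdef, show ((k:ℝ) + 1) = ((k + 1 : ℕ) : ℝ) by push_cast; ring]
    exact Real.rpow_inv_natCast_pow (by positivity) (Nat.succ_ne_zero k)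
  set x : Fin (k + 1) → ℝ :=
    fun i => |(((G i).eval b : ℤ) : ℝ)| / |(((G i).eval a : ℤ) : ℝ)| with hxdef
  have hx0 : ∀ i, 0 < x i := fun i =>
    div_pos (abs_pos.mpr (Int.cast_ne_zero.mpr (hGb i)))
      (abs_pos.mpr (Int.cast_ne_zero.mpr (hGa i)))
  have habsprod : ∀ t : ℤ, |((f.eval t : ℤ) : ℝ)| = ∏ i, |(((G i).eval t : ℤ) : ℝ)| := by
    intro t
    rw [hprodeval t]
    push_cast
    rw [Finset.abs_prod]
  have hprodx : ∏ i, x i = |((f.eval b : ℤ) : ℝ)| / |((f.eval a : ℤ) : ℝ)| := by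
    rw [hxdef, Finset.prod_div_distrib, habsprod a, habsprod b]
  have hex : ∃ i, x i ≤ R := by
    by_contra hcon
    push_neg at hcon
    have h1 : ∏ _i : Fin (k + 1), R < ∏ i, x i :=
      Finset.prod_lt_prod_of_nonempty (fun i _ => hR0) (fun i _ => hcon i) Finset.univ_nonempty
    rw [Finset.prod_const, Finset.card_univ, Fintype.card_fin, hRpow, hprodx] at h1
    exact lt_irrefl _ h1
  obtain ⟨i, hxle⟩ := hex
  have hfGH : f = G i * ∏ j ∈ Finset.univ.erase i, G j := by
    rw [hfeq, ← Finset.mul_prod_erase _ _ (Finset.mem_univ i)]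
  have hadm_a := adm_of_factor f a (G i) _ hfGH ha
  have hadm_b := adm_of_factor f b (G i) _ hfGH hb0
  have hxq : x i ≤ q := by
    apply hq.2
    refine ⟨(((G i).eval a).natAbs : ℤ), (((G i).eval b).natAbs : ℤ), hadm_a, hadm_b, ?_, hxle⟩
    rw [hxdef]
    push_cast [Nat.cast_natAbs]
    rfl
  have hMroot : ∀ θ : ℂ, Polynomial.aeval θ (G i) = 0 → ‖θ‖ ≤ M := by
    intro θ h0
    apply hM
    rw [hfeq, map_prod]
    exact Finset.prod_eq_zero (Finset.mem_univ i) h0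
  have hrb := root_bound (G i) (hdegG i) M hMroot q hq1 a b hb
  have hGapos : (0:ℝ) < |(((G i).eval a : ℤ) : ℝ)| :=
    abs_pos.mpr (Int.cast_ne_zero.mpr (hGa i))
  have hqlt : q < x i := (lt_div_iff₀ hGapos).mpr (by linarith)
  linarith
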